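/- Let Ω ⊆ ℝ^5 be open and let θ : Ω → ℝ be smooth satisfying the second heavenly hierarchy equations: θ₁₄ − θ₂₃ + θ₁₁θ₂₂ − θ₁₂² = 0, θ₁₅ − θ₃₃ + θ₁₁θ₂₃ − θ₁₂θ₁₃ = 0, θ₂₅ − θ₃₄ + θ₁₂θ₂₃ − θ₂₂θ₁₃ = 0 on Ω. Then the functions u := −∂θ/∂x¹, v := ∂θ/∂x², w := 0 satisfy all nine equations of the system (triple) on Ω: Q₁(u) = w₁, Q₁(v) = −w₂, Q₁(w) = 0, Q₂(u) = −u₁w₁, Q₂(v) = u₁w₂, Q₂(w) = −w₁², Q₃(u) = −w₃ − u₁w₂, Q₃(v) = w₄ + v₂w₁ − (v₁−u₂)w₂, Q₃(w) = −w₁w₂, where Q₁ = ∂₂∂₃ − ∂₁∂₄ + u₁∂₂² + (v₁−u₂)∂₁∂₂ − v₂∂₁², Q₂ = ∂₃² − ∂₁∂₅ + u₁∂₂∂₃ + v₁∂₁∂₃ − u₃∂₁∂₂ + (w−v₃)∂₁², Q₃ = ∂₃∂₄ − ∂₂∂₅ + u₂∂₂∂₃ − u₃∂₂² + v₂∂₁∂₃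 + (w−v₃)∂₁∂₂. -/

import Mathlib

/-- The `i`-th standard coordinate (basis) vector of `ℝᵐ`. -/
noncomputable def e (m : ℕ) (i : Fin m) : Fin m → ℝ := Pi.single i 1

/-- Partial derivative `∂f/∂xⁱ` of a scalar function on `ℝᵐ`. -/
noncomputable def pd (m : ℕ) (f : (Fin m → ℝ) → ℝ) (i : Fin m) (x : Fin m → ℝ) : ℝ :=
  fderiv ℝ f x (e m i)

/-- Second partial derivative `∂²f/∂xⁱ∂xʲ`. -/
noncomputable def pd2 (m : ℕ) (f : (Fin m → ℝ) → ℝ) (i j : Fin m) (x : Fin m → ℝ) : ℝ :=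
  pd m (fun y => pd m f i y) j x

/-- Lie bracket of vector fields on (an open subset of) `ℝᵐ`:
`[X,Y](x) = DY(x)·X(x) − DX(x)·Y(x)`. -/
noncomputable def vbr (m : ℕ) (X Y : (Fin m → ℝ) → (Fin m → ℝ)) (x : Fin m → ℝ) :
    Fin m → ℝ :=
  fderiv ℝ Y x (X x) - fderiv ℝ X x (Y x)

/-- `Q₁ = ∂₂∂₃ − ∂₁∂₄ + u₁∂₂² + (v₁−u₂)∂₁∂₂ − v₂∂₁²`. -/
noncomputable def Q1op (u v f : (Fin 5 → ℝ) → ℝ) (x : Fin 5 → ℝ) : ℝ :=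
  pd2 5 f 1 2 x - pd2 5 f 0 3 x + pd 5 u 0 x * pd2 5 f 1 1 x
  + (pd 5 v 0 x - pd 5 u 1 x) * pd2 5 f 0 1 x - pd 5 v 1 x * pd2 5 f 0 0 x

/-- `Q₂ = ∂₃² − ∂₁∂₅ + u₁∂₂∂₃ + v₁∂₁∂₃ − u₃∂₁∂₂ + (w−v₃)∂₁²`. -/
noncomputable def Q2op (u v w f : (Fin 5 → ℝ) → ℝ) (x : Fin 5 → ℝ) : ℝ :=
  pd2 5 f 2 2 x - pd2 5 f 0 4 x + pd 5 u 0 x * pd2 5 f 1 2 x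
  + pd 5 v 0 x * pd2 5 f 0 2 x - pd 5 u 2 x * pd2 5 f 0 1 x
  + (w x - pd 5 v 2 x) * pd2 5 f 0 0 x

/-- `Q₃ = ∂₃∂₄ − ∂₂∂₅ + u₂∂₂∂₃ − u₃∂₂² + v₂∂₁∂₃ + (w−v₃)∂₁∂₂`. -/
noncomputable def Q3op (u v w f : (Fin 5 → ℝ) → ℝ) (x : Fin 5 → ℝ) : ℝ :=
  pd2 5 f 2 3 x - pd2 5 f 1 4 x + pd 5 u 1 x * pd2 5 f 1 2 x
  - pd 5 u 2 x * pd2 5 f 1 1 x + pd 5 v 1 x * pd2 5 f 0 2 x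
  + (w x - pd 5 v 2 x) * pd2 5 f 0 1 x

/- ----------------- auxiliary lemmas ----------------- -/

lemma contDiffAt_pd {f : (Fin 5 → ℝ) → ℝ} {x} (hf : ContDiffAt ℝ (⊤:ℕ∞) f x) (i : Fin 5) :
    ContDiffAt ℝ (⊤:ℕ∞) (fun y => pd 5 f i y) x := by
  have h1 : ContDiffAt ℝ (⊤:ℕ∞) (fderiv ℝ f) x := hf.fderiv_right (by simp)
  exact h1.clm_apply contDiffAt_const

lemma pd2_symm {f : (Fin 5 → ℝ) → ℝ} {x} (hf : ContDiffAt ℝ (⊤:ℕ∞) f x) (i j : Fin 5) :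
    pd2 5 f i j x = pd2 5 f j i x := by
  have hsym : IsSymmSndFDerivAt ℝ f x :=
    hf.isSymmSndFDerivAt (by simp [minSmoothness_of_isRCLikeNormedField]; exact_mod_cast ENat.natCast_le_of_coe_top_le_withTop le_rfl 2)
  have hdf : DifferentiableAt ℝ (fderiv ℝ f) x :=
    (hf.fderiv_right (m := (⊤:ℕ∞)) (by simp)).differentiableAt (by simp)
  have key : ∀ a b : Fin 5,
      pd2 5 f a b x = fderiv ℝ (fderiv ℝ f) x (e 5 b) (e 5 a) := by
    intro a b
    have : fderiv ℝ (fun y => (fderiv ℝ f y) (e 5 a)) x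
        = (fderiv ℝ f x).comp (fderiv ℝ (fun _ => e 5 a) x)
          + (fderiv ℝ (fderiv ℝ f) x).flip (e 5 a) :=
      fderiv_clm_apply hdf (differentiableAt_const _)
    simp only [pd2, pd]
    rw [this]
    simp
  rw [key i j, key j i, hsym]

lemma pd_congr {f g : (Fin 5 → ℝ) → ℝ} {x} (h : f =ᶠ[nhds x] g) (i : Fin 5) :
    pd 5 f i x = pd 5 g i x := by
  unfold pd; rw [h.fderiv_eq]

lemma pd_neg (f : (Fin 5 → ℝ) → ℝ) (i : Fin 5) (x : Fin 5 → ℝ) :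
    pd 5 (fun y => -(f y)) i x = -(pd 5 f i x) := by
  simp [pd, fderiv_neg]

lemma pd_const (c : ℝ) (i : Fin 5) (x : Fin 5 → ℝ) :
    pd 5 (fun _ => c) i x = 0 := by
  simp [pd]

lemma pd_comb {A B C D E F : (Fin 5 → ℝ) → ℝ} {x : Fin 5 → ℝ} (i : Fin 5)
    (hA : DifferentiableAt ℝ A x) (hB : DifferentiableAt ℝ B x)
    (hC : DifferentiableAt ℝ C x) (hD : DifferentiableAt ℝ D x)
    (hE : DifferentiableAt ℝ E x) (hF : DifferentiableAt ℝ F x) :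
    pd 5 (fun y => A y - B y + C y * D y - E y * F y) i x
      = pd 5 A i x - pd 5 B i x
        + (C x * pd 5 D i x + D x * pd 5 C i x)
        - (E x * pd 5 F i x + F x * pd 5 E i x) := by
  unfold pd
  rw [fderiv_fun_sub ((hA.fun_sub hB).fun_add (hC.fun_mul hD)) (hE.fun_mul hF),
    fderiv_fun_add (hA.fun_sub hB) (hC.fun_mul hD), fderiv_fun_sub hA hB,
    fderiv_fun_mul hC hD, fderiv_fun_mul hE hF]
  simp only [ContinuousLinearMap.sub_apply, ContinuousLinearMap.add_apply,
    ContinuousLinearMap.smul_apply, smul_eq_mul]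

/-- Reduction (b): a solution `θ` of the second heavenly hierarchy yields a
solution `u = −θ₁`, `v = θ₂`, `w = 0` of the system (triple) of the hierarchy of
conformal self-duality equations (coordinates `x¹,…,x⁵` indexed by `0,…,4`). -/
theorem stmt_19 (Ω : Set (Fin 5 → ℝ)) (hΩ : IsOpen Ω)
    (θ : (Fin 5 → ℝ) → ℝ) (hθ : ContDiffOn ℝ (⊤:ℕ∞) θ Ω)
    (h1 : ∀ x ∈ Ω, pd2 5 θ 0 3 x - pd2 5 θ 1 2 x
        + pd2 5 θ 0 0 x * pd2 5 θ 1 1 x - pd2 5 θ 0 1 x ^ 2 = 0)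
    (h2 : ∀ x ∈ Ω, pd2 5 θ 0 4 x - pd2 5 θ 2 2 x
        + pd2 5 θ 0 0 x * pd2 5 θ 1 2 x - pd2 5 θ 0 1 x * pd2 5 θ 0 2 x = 0)
    (h3 : ∀ x ∈ Ω, pd2 5 θ 1 4 x - pd2 5 θ 2 3 x
        + pd2 5 θ 0 1 x * pd2 5 θ 1 2 x - pd2 5 θ 1 1 x * pd2 5 θ 0 2 x = 0)
    (u v w : (Fin 5 → ℝ) → ℝ)
    (hu : u = fun x => -(pd 5 θ 0 x))
    (hv : v = fun x => pd 5 θ 1 x)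
    (hw : w = fun _ => 0) :
    ∀ x ∈ Ω,
      Q1op u v u x = pd 5 w 0 x
      ∧ Q1op u v v x = -pd 5 w 1 x
      ∧ Q1op u v w x = 0
      ∧ Q2op u v w u x = -(pd 5 u 0 x * pd 5 w 0 x)
      ∧ Q2op u v w v x = pd 5 u 0 x * pd 5 w 1 x
      ∧ Q2op u v w w x = -(pd 5 w 0 x ^ 2)
      ∧ Q3op u v w u x = -pd 5 w 2 x - pd 5 u 0 x * pd 5 w 1 x
      ∧ Q3op u v w v x = pd 5 w 3 x + pd 5 v 1 x * pd 5 w 0 x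
          - (pd 5 v 0 x - pd 5 u 1 x) * pd 5 w 1 x
      ∧ Q3op u v w w x = -(pd 5 w 0 x * pd 5 w 1 x) := by
  intro x hx
  have hmem : Ω ∈ nhds x := hΩ.mem_nhds hx
  have hθx : ∀ y ∈ Ω, ContDiffAt ℝ (⊤:ℕ∞) θ y := fun y hy => hθ.contDiffAt (hΩ.mem_nhds hy)
  -- derivatives of w
  have hw1 : ∀ (i : Fin 5) (x' : Fin 5 → ℝ), pd 5 w i x' = 0 := by
    intro i x'; rw [hw]; exact pd_const 0 i x'
  have hw2 : ∀ (i j : Fin 5) (x' : Fin 5 → ℝ), pd2 5 w i j x' = 0 := by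
    intro i j x'
    rw [pd2, show (fun y => pd 5 w i y) = fun _ => (0:ℝ) from funext fun y => hw1 i y]
    exact pd_const 0 j x'
  -- derivatives of u and v
  have hu1 : ∀ (i : Fin 5) (x' : Fin 5 → ℝ), pd 5 u i x' = -(pd2 5 θ 0 i x') := by
    intro i x'; rw [hu, pd2]; exact pd_neg _ i x'
  have hu2 : ∀ (i j : Fin 5) (x' : Fin 5 → ℝ),
      pd2 5 u i j x' = -(pd 5 (fun y => pd2 5 θ 0 i y) j x') := by
    intro i j x'
    rw [pd2, show (fun y => pd 5 u i y) = fun y => -(pd2 5 θ 0 i y) from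
      funext fun y => hu1 i y]
    exact pd_neg _ j x'
  have hv1 : ∀ (i : Fin 5) (x' : Fin 5 → ℝ), pd 5 v i x' = pd2 5 θ 1 i x' := by
    intro i x'; rw [hv, pd2]
  have hv2 : ∀ (i j : Fin 5) (x' : Fin 5 → ℝ),
      pd2 5 v i j x' = pd 5 (fun y => pd2 5 θ 1 i y) j x' := by
    intro i j x'
    rw [pd2, show (fun y => pd 5 v i y) = fun y => pd2 5 θ 1 i y from
      funext fun y => hv1 i y]
  -- smoothness of second partials of θ on Ω
  have hsm : ∀ (a b : Fin 5), ∀ y ∈ Ω, ContDiffAt ℝ (⊤:ℕ∞) (fun z => pd2 5 θ a b z) y := by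
    intro a b y hy
    exact contDiffAt_pd (contDiffAt_pd (hθx y hy) a) b
  have hdiff : ∀ (a b : Fin 5), DifferentiableAt ℝ (fun z => pd2 5 θ a b z) x :=
    fun a b => (hsm a b x hx).differentiableAt
      (by simp)
  have hw0 : w x = 0 := by rw [hw]
  have ssym10 : pd2 5 θ 1 0 x = pd2 5 θ 0 1 x := pd2_symm (hθx x hx) 1 0
  -- symmetry of third partial derivatives
  have t23 : ∀ a b c : Fin 5,
      pd 5 (fun y => pd2 5 θ a b y) c x = pd 5 (fun y => pd2 5 θ a c y) b x := by
    intro a b c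
    exact pd2_symm (contDiffAt_pd (hθx x hx) a) b c
  have t12 : ∀ a b c : Fin 5,
      pd 5 (fun y => pd2 5 θ a b y) c x = pd 5 (fun y => pd2 5 θ b a y) c x := by
    intro a b c
    exact pd_congr (Filter.eventuallyEq_of_mem hmem
      (fun y hy => pd2_symm (hθx y hy) a b)) c
  -- the three key identities: derivatives of the heavenly equations vanish
  have K1 : ∀ d : Fin 5,
      pd 5 (fun y => pd2 5 θ 0 3 y) d x - pd 5 (fun y => pd2 5 θ 1 2 y) d x
        + (pd2 5 θ 0 0 x * pd 5 (fun y => pd2 5 θ 1 1 y) d x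
            + pd2 5 θ 1 1 x * pd 5 (fun y => pd2 5 θ 0 0 y) d x)
        - (pd2 5 θ 0 1 x * pd 5 (fun y => pd2 5 θ 0 1 y) d x
            + pd2 5 θ 0 1 x * pd 5 (fun y => pd2 5 θ 0 1 y) d x) = 0 := by
    intro d
    have hev : (fun y => pd2 5 θ 0 3 y - pd2 5 θ 1 2 y
        + pd2 5 θ 0 0 y * pd2 5 θ 1 1 y - pd2 5 θ 0 1 y * pd2 5 θ 0 1 y)
        =ᶠ[nhds x] (fun _ => (0:ℝ)) :=
      Filter.eventuallyEq_of_mem hmem (fun y hy => by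
        have h := h1 y hy; linear_combination h)
    rw [← pd_comb d (hdiff 0 3) (hdiff 1 2) (hdiff 0 0) (hdiff 1 1) (hdiff 0 1) (hdiff 0 1),
      pd_congr hev d, pd_const]
  have K2 : ∀ d : Fin 5,
      pd 5 (fun y => pd2 5 θ 0 4 y) d x - pd 5 (fun y => pd2 5 θ 2 2 y) d x
        + (pd2 5 θ 0 0 x * pd 5 (fun y => pd2 5 θ 1 2 y) d x
            + pd2 5 θ 1 2 x * pd 5 (fun y => pd2 5 θ 0 0 y) d x)
        - (pd2 5 θ 0 1 x * pd 5 (fun y => pd2 5 θ 0 2 y) d x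
            + pd2 5 θ 0 2 x * pd 5 (fun y => pd2 5 θ 0 1 y) d x) = 0 := by
    intro d
    have hev : (fun y => pd2 5 θ 0 4 y - pd2 5 θ 2 2 y
        + pd2 5 θ 0 0 y * pd2 5 θ 1 2 y - pd2 5 θ 0 1 y * pd2 5 θ 0 2 y)
        =ᶠ[nhds x] (fun _ => (0:ℝ)) :=
      Filter.eventuallyEq_of_mem hmem (fun y hy => h2 y hy)
    rw [← pd_comb d (hdiff 0 4) (hdiff 2 2) (hdiff 0 0) (hdiff 1 2) (hdiff 0 1) (hdiff 0 2),
      pd_congr hev d, pd_const]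
  have K3 : ∀ d : Fin 5,
      pd 5 (fun y => pd2 5 θ 1 4 y) d x - pd 5 (fun y => pd2 5 θ 2 3 y) d x
        + (pd2 5 θ 0 1 x * pd 5 (fun y => pd2 5 θ 1 2 y) d x
            + pd2 5 θ 1 2 x * pd 5 (fun y => pd2 5 θ 0 1 y) d x)
        - (pd2 5 θ 1 1 x * pd 5 (fun y => pd2 5 θ 0 2 y) d x
            + pd2 5 θ 0 2 x * pd 5 (fun y => pd2 5 θ 1 1 y) d x) = 0 := by
    intro d
    have hev : (fun y => pd2 5 θ 1 4 y - pd2 5 θ 2 3 y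
        + pd2 5 θ 0 1 y * pd2 5 θ 1 2 y - pd2 5 θ 1 1 y * pd2 5 θ 0 2 y)
        =ᶠ[nhds x] (fun _ => (0:ℝ)) :=
      Filter.eventuallyEq_of_mem hmem (fun y hy => h3 y hy)
    rw [← pd_comb d (hdiff 1 4) (hdiff 2 3) (hdiff 0 1) (hdiff 1 2) (hdiff 1 1) (hdiff 0 2),
      pd_congr hev d, pd_const]
  refine ⟨?_, ?_, ?_, ?_, ?_, ?_, ?_, ?_, ?_⟩
  · -- Q1 u
    have key := K1 0
    rw [t23 0 3 0, t23 1 2 0, t12 1 0 2, t23 1 1 0, t12 1 0 1, t23 0 1 0] at key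
    simp only [Q1op, hu1, hu2, hv1, hv2, hw1, ssym10]
    linear_combination key
  · -- Q1 v
    have key := K1 1
    rw [t23 0 3 1, t23 1 2 1] at key
    simp only [Q1op, hu1, hu2, hv1, hv2, hw1, ssym10]
    rw [t12 1 0 3, t12 1 0 1,
      show pd 5 (fun y => pd2 5 θ 1 0 y) 0 x = pd 5 (fun y => pd2 5 θ 0 0 y) 1 x from
        (t12 1 0 0).trans (t23 0 1 0)]
    linear_combination -key
  · -- Q1 w
    simp only [Q1op, hu1, hu2, hv1, hv2, hw1, hw2]
    ring
  · -- Q2 u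
    have key := K2 0
    rw [t23 0 4 0, t23 2 2 0, t12 2 0 2, t23 1 2 0, t12 1 0 2, t23 0 1 0, t23 0 2 0] at key
    simp only [Q2op, hu1, hu2, hv1, hv2, hw1, hw0, ssym10]
    linear_combination key
  · -- Q2 v
    have key := K2 1
    rw [t23 0 4 1, t23 2 2 1, t12 2 1 2, t23 1 2 1, t23 0 2 1] at key
    simp only [Q2op, hu1, hu2, hv1, hv2, hw1, hw0, ssym10]
    rw [t12 1 0 4, t12 1 0 2,
      show pd 5 (fun y => pd2 5 θ 1 0 y) 1 x = pd 5 (fun y => pd2 5 θ 0 1 y) 1 x from t12 1 0 1,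
      show pd 5 (fun y => pd2 5 θ 1 0 y) 0 x = pd 5 (fun y => pd2 5 θ 0 0 y) 1 x from
        (t12 1 0 0).trans (t23 0 1 0)]
    linear_combination -key
  · -- Q2 w
    simp only [Q2op, hu1, hu2, hv1, hv2, hw1, hw2, hw0]
    ring
  · -- Q3 u
    have key := K3 0
    rw [t23 1 4 0, t12 1 0 4, t23 2 3 0, t12 2 0 3, t23 0 1 0, t23 1 2 0, t12 1 0 2,
      t23 1 1 0, t12 1 0 1, t23 0 2 0] at key
    simp only [Q3op, hu1, hu2, hv1, hv2, hw1, hw0, ssym10]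
    linear_combination key
  · -- Q3 v
    have key := K3 1
    rw [t23 1 4 1, t23 2 3 1, t12 2 1 3, t23 1 2 1, t23 0 2 1] at key
    simp only [Q3op, hu1, hu2, hv1, hv2, hw1, hw0, ssym10]
    rw [show pd 5 (fun y => pd2 5 θ 1 0 y) 2 x = pd 5 (fun y => pd2 5 θ 0 1 y) 2 x from t12 1 0 2,
      show pd 5 (fun y => pd2 5 θ 1 0 y) 1 x = pd 5 (fun y => pd2 5 θ 0 1 y) 1 x from t12 1 0 1]
    linear_combination -key
  · -- Q3 w
    simp only [Q3op, hu1, hu2, hv1, hv2, hw1, hw2, hw0]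
    ring
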